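/- Let $U$ be the entropy function on the interior $P^o$ of a polytope with vertices $a_1,\dots,a_n$ spanning $\mathbb{R}^d$, and $p_k(x)$ the unique maximizing weights. Then $U$ is differentiable on $P^o$, and for every $x\in P^o$ and every representation $\xi = \sum_k q_k (x - a_k)$ with real coefficients $q_k$, one has $\sum_k q_k / p_k(x) = n \sum_k q_k - (\xi, \nabla U(x))$. -/

import Mathlib

open Finset

/-- The entropy function of a polytope with vertices `a 1, …, a n`:
`U(x) = sup { ∑ᵢ ln pᵢ : pᵢ > 0, ∑ pᵢ = 1, ∑ pᵢ aᵢ = x }`. -/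
noncomputable def entropyU {d n : ℕ} (a : Fin n → EuclideanSpace ℝ (Fin d))
    (x : EuclideanSpace ℝ (Fin d)) : ℝ :=
  sSup {s | ∃ p : Fin n → ℝ, (∀ i, 0 < p i) ∧ ∑ i, p i = 1 ∧
    ∑ i, p i • a i = x ∧ s = ∑ i, Real.log (p i)}

set_option maxHeartbeats 1000000 in
/-- `U` is differentiable on the interior, and for any representation
`ξ = ∑ₖ qₖ (x - aₖ)` one has `∑ₖ qₖ/pₖ(x) = n ∑ₖ qₖ - U_{(ξ)}(x)`. -/
theorem stmt_8 {d n : ℕ} (hn : 2 ≤ n) (a : Fin n → EuclideanSpace ℝ (Fin d))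
    (ha : Function.Injective a)
    (hspan : affineSpan ℝ (Set.range a) = ⊤)
    (P : Set (EuclideanSpace ℝ (Fin d)))
    (hP : P = convexHull ℝ (Set.range a))
    (hvert : ∀ i, a i ∈ Set.extremePoints ℝ P)
    (hint : (interior P).Nonempty)
    (p : EuclideanSpace ℝ (Fin d) → Fin n → ℝ)
    (hp : ∀ x ∈ interior P, (∀ i, 0 < p x i) ∧ ∑ i, p x i = 1 ∧
      ∑ i, p x i • a i = x ∧ ∑ i, Real.log (p x i) = entropyU a x) :
    (∀ x ∈ interior P, DifferentiableAt ℝ (entropyU a) x) ∧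
    ∀ x ∈ interior P, ∀ q : Fin n → ℝ, ∀ ξ : EuclideanSpace ℝ (Fin d),
      ξ = ∑ k, q k • (x - a k) →
      ∑ k, q k / p x k = (n : ℝ) * ∑ k, q k - fderiv ℝ (entropyU a) x ξ := by
  classical
  have i0 : Fin n := ⟨0, by omega⟩
  -- boundedness of the defining set
  have hbdd : ∀ x : EuclideanSpace ℝ (Fin d), BddAbove {s | ∃ w : Fin n → ℝ,
      (∀ i, 0 < w i) ∧ ∑ i, w i = 1 ∧ ∑ i, w i • a i = x ∧ s = ∑ i, Real.log (w i)} := by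
    intro x
    refine ⟨0, ?_⟩
    rintro s ⟨w, hw, hw1, -, rfl⟩
    refine Finset.sum_nonpos fun i _ => Real.log_nonpos (hw i).le ?_
    calc w i ≤ ∑ j, w j := Finset.single_le_sum (fun j _ => (hw j).le) (Finset.mem_univ i)
      _ = 1 := hw1
  have hle : ∀ (x : EuclideanSpace ℝ (Fin d)) (w : Fin n → ℝ), (∀ i, 0 < w i) →
      ∑ i, w i = 1 → ∑ i, w i • a i = x → ∑ i, Real.log (w i) ≤ entropyU a x := by
    intro x w h1 h2 h3
    exact le_csSup (hbdd x) ⟨w, h1, h2, h3, rfl⟩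
  -- the linear map T and its right inverse g
  let T : (Fin n → ℝ) →ₗ[ℝ] ℝ × EuclideanSpace ℝ (Fin d) :=
  { toFun := fun q => (∑ i, q i, ∑ i, q i • a i)
    map_add' := fun q r => by
      simp [Prod.ext_iff, Finset.sum_add_distrib, add_smul]
    map_smul' := fun c q => by
      refine Prod.ext ?_ ?_
      · simp [Finset.mul_sum]
      · simp [Finset.smul_sum, smul_smul] }
  have hTapp : ∀ q : Fin n → ℝ, T q = (∑ i, q i, ∑ i, q i • a i) := fun _ => rfl
  have hTsingle : ∀ i : Fin n, T (Pi.single i 1) = (1, a i) := by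
    intro i
    rw [hTapp]
    simp [Pi.single_apply, ite_smul]
  have hTsurj : LinearMap.range T = ⊤ := by
    have hvs : vectorSpan ℝ (Set.range a) = ⊤ := by
      rw [← direction_affineSpan, hspan]
      exact AffineSubspace.direction_top ℝ _ _
    have hzero : ∀ v : EuclideanSpace ℝ (Fin d), ((0 : ℝ), v) ∈ LinearMap.range T := by
      intro v
      have hv : v ∈ Submodule.span ℝ (Set.range a -ᵥ Set.range a) := by
        rw [← vectorSpan_def, hvs]; trivial
      induction hv using Submodule.span_induction with
      | mem w hw =>
        obtain ⟨y, ⟨i, rfl⟩, z, ⟨j, rfl⟩, rfl⟩ := hw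
        refine ⟨Pi.single i 1 - Pi.single j 1, ?_⟩
        rw [map_sub, hTsingle, hTsingle]
        simp [Prod.ext_iff]
      | zero => exact ⟨0, by rw [map_zero]; rfl⟩
      | add y z hy hz hy' hz' =>
        obtain ⟨qy, hqy⟩ := hy'
        obtain ⟨qz, hqz⟩ := hz'
        refine ⟨qy + qz, ?_⟩
        rw [map_add, hqy, hqz]
        simp
      | smul c y hy hy' =>
        obtain ⟨qy, hqy⟩ := hy'
        refine ⟨c • qy, ?_⟩
        rw [map_smul, hqy]
        simp
    rw [eq_top_iff]
    rintro ⟨s, w⟩ -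
    have h1 : ((s, w) : ℝ × EuclideanSpace ℝ (Fin d)) = s • (1, a i0) + (0, w - s • a i0) := by
      simp [Prod.ext_iff]
    rw [h1]
    exact Submodule.add_mem _ (Submodule.smul_mem _ _ ⟨Pi.single i0 1, hTsingle i0⟩) (hzero _)
  obtain ⟨g, hg⟩ := T.exists_rightInverse_of_surjective hTsurj
  have hg12 : ∀ u : ℝ × EuclideanSpace ℝ (Fin d),
      (∑ i, g u i) = u.1 ∧ (∑ i, g u i • a i) = u.2 := by
    intro u
    have h := LinearMap.congr_fun hg u
    rw [LinearMap.comp_apply, hTapp, LinearMap.id_apply] at h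
    exact ⟨congrArg Prod.fst h, congrArg Prod.snd h⟩
  have hg1 : ∀ u : ℝ × EuclideanSpace ℝ (Fin d), (∑ i, g u i) = u.1 := fun u => (hg12 u).1
  have hg2 : ∀ u : ℝ × EuclideanSpace ℝ (Fin d), (∑ i, g u i • a i) = u.2 := fun u => (hg12 u).2
  -- main pointwise statement
  have main : ∀ x ∈ interior P, ∃ L : EuclideanSpace ℝ (Fin d) →L[ℝ] ℝ,
      HasFDerivAt (entropyU a) L x ∧
      ∀ (q : Fin n → ℝ) (ξ : EuclideanSpace ℝ (Fin d)), ξ = ∑ k, q k • (x - a k) →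
        ∑ k, q k / p x k = (n : ℝ) * ∑ k, q k - L ξ := by
    intro x hx
    obtain ⟨hpos, hsum, hbar, hval⟩ := hp x hx
    -- first order condition
    have hfoc : ∀ q : Fin n → ℝ, ∑ i, q i = 0 → ∑ i, q i • a i = 0 →
        ∑ i, q i / p x i = 0 := by
      intro q hq0 hqa
      have hev : ∀ᶠ t : ℝ in nhds 0, ∀ i, 0 < p x i + t * q i := by
        rw [Filter.eventually_all]
        intro i
        have hc : Filter.Tendsto (fun t : ℝ => p x i + t * q i) (nhds 0) (nhds (p x i)) := by
          have h := (Continuous.tendsto (by continuity :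
            Continuous fun t : ℝ => p x i + t * q i) 0)
          simpa using h
        exact hc.eventually (eventually_gt_nhds (hpos i))
      have hmax : IsLocalMax (fun t : ℝ => ∑ i, Real.log (p x i + t * q i)) 0 := by
        filter_upwards [hev] with t ht
        have h1 : ∑ i, (p x i + t * q i) = 1 := by
          rw [Finset.sum_add_distrib, hsum, ← Finset.mul_sum, hq0, mul_zero, add_zero]
        have h2 : ∑ i, (p x i + t * q i) • a i = x := by
          simp only [add_smul, Finset.sum_add_distrib, hbar, mul_smul, ← Finset.smul_sum,
            hqa, smul_zero, add_zero]
        have h3 := hle x _ ht h1 h2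
        simpa only [zero_mul, add_zero, hval] using h3
      have hder : HasDerivAt (fun t : ℝ => ∑ i, Real.log (p x i + t * q i))
          (∑ i, q i / p x i) 0 := by
        apply HasDerivAt.fun_sum
        intro i _
        have h1 : HasDerivAt (fun t : ℝ => p x i + t * q i) (q i) 0 := by
          simpa using ((hasDerivAt_id (0:ℝ)).mul_const (q i)).const_add (p x i)
        have h2 := h1.log (by simpa using (hpos i).ne')
        simpa using h2
      have h4 := hder.deriv
      rw [hmax.deriv_eq_zero] at h4
      exact h4.symm
    -- the linear functional Φ
    let Φ : (ℝ × EuclideanSpace ℝ (Fin d)) →ₗ[ℝ] ℝ :=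
    { toFun := fun u => ∑ i, g u i / p x i
      map_add' := fun u v => by simp [map_add, add_div, Finset.sum_add_distrib]
      map_smul' := fun c u => by simp [Finset.mul_sum, mul_div_assoc] }
    have hΦapp : ∀ u, Φ u = ∑ i, g u i / p x i := fun _ => rfl
    let L : EuclideanSpace ℝ (Fin d) →L[ℝ] ℝ :=
      (Φ.comp (LinearMap.inr ℝ ℝ (EuclideanSpace ℝ (Fin d)))).toContinuousLinearMap
    have hLapp : ∀ v, L v = Φ (0, v) := fun _ => rfl
    -- key identity
    have hident : ∀ q : Fin n → ℝ, ∑ i, q i / p x i = Φ (∑ i, q i, ∑ i, q i • a i) := by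
      intro q
      obtain ⟨hgu1, hgu2⟩ := hg12 (∑ i, q i, ∑ i, q i • a i)
      simp only at hgu1 hgu2
      have h2 : ∑ i, (q i - g (∑ i, q i, ∑ i, q i • a i) i) = 0 := by
        rw [Finset.sum_sub_distrib, hgu1, sub_self]
      have h3 : ∑ i, (q i - g (∑ i, q i, ∑ i, q i • a i) i) • a i = 0 := by
        simp only [sub_smul]
        rw [Finset.sum_sub_distrib, hgu2, sub_self]
      have h0 := hfoc (fun i => q i - g (∑ i, q i, ∑ i, q i • a i) i) h2 h3
      have h1 : ∑ i, (q i - g (∑ i, q i, ∑ i, q i • a i) i) / p x i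
          = ∑ i, q i / p x i - ∑ i, g (∑ i, q i, ∑ i, q i • a i) i / p x i := by
        rw [← Finset.sum_sub_distrib]
        exact Finset.sum_congr rfl fun i _ => by rw [sub_div]
      rw [h1] at h0
      rw [hΦapp]
      linarith
    have hsplit : ∀ (s : ℝ) (w : EuclideanSpace ℝ (Fin d)),
        Φ (s, w) = s * Φ (1, 0) + L w := by
      intro s w
      have h1 : ((s, w) : ℝ × EuclideanSpace ℝ (Fin d)) = s • (1, 0) + (0, w) := by
        simp [Prod.ext_iff]
      rw [h1, map_add, map_smul, hLapp]
      simp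
    have hn' : Φ (1, x) = (n : ℝ) := by
      have h1 := hident (p x)
      rw [hsum, hbar] at h1
      have h2 : ∑ i, p x i / p x i = (n : ℝ) := by
        rw [Finset.sum_congr rfl fun i _ => div_self (hpos i).ne']
        simp
      rw [← h1, h2]
    -- the formula
    have hform : ∀ (q : Fin n → ℝ) (ξ : EuclideanSpace ℝ (Fin d)),
        ξ = ∑ k, q k • (x - a k) →
        ∑ k, q k / p x k = (n : ℝ) * ∑ k, q k - L ξ := by
      intro q ξ hξ
      have h0 : ξ = (∑ k, q k) • x - ∑ k, q k • a k := by
        rw [hξ]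
        simp [smul_sub, Finset.sum_sub_distrib, Finset.sum_smul]
      have hw : ∑ k, q k • a k = (∑ k, q k) • x - ξ := by rw [h0]; abel
      have hLx : Φ (1, 0) + L x = (n : ℝ) := by
        have h1 := hsplit 1 x
        rw [hn'] at h1
        linarith
      calc ∑ k, q k / p x k = Φ (∑ k, q k, ∑ k, q k • a k) := hident q
        _ = (∑ k, q k) * Φ (1, 0) + L (∑ k, q k • a k) := hsplit _ _
        _ = (∑ k, q k) * Φ (1, 0) + ((∑ k, q k) * L x - L ξ) := by
            rw [hw, map_sub, map_smul]; simp
        _ = (∑ k, q k) * (Φ (1, 0) + L x) - L ξ := by ring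
        _ = (n : ℝ) * ∑ k, q k - L ξ := by rw [hLx]; ring
    -- constants
    have hne : (Finset.univ : Finset (Fin n)).Nonempty := ⟨i0, Finset.mem_univ _⟩
    set pm := Finset.univ.inf' hne (p x) with hpm
    have hpm0 : 0 < pm := by
      rw [hpm, Finset.lt_inf'_iff]
      exact fun i _ => hpos i
    have hpmle : ∀ i, pm ≤ p x i := fun i => Finset.inf'_le _ (Finset.mem_univ i)
    let Gc : EuclideanSpace ℝ (Fin d) →L[ℝ] (Fin n → ℝ) :=
      (g.comp (LinearMap.inr ℝ ℝ (EuclideanSpace ℝ (Fin d)))).toContinuousLinearMap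
    have hGcapp : ∀ v, Gc v = g (0, v) := fun _ => rfl
    set K := ‖Gc‖ with hK
    have hK0 : (0:ℝ) ≤ K := norm_nonneg _
    have hGc : ∀ (v : EuclideanSpace ℝ (Fin d)) i, |g (0, v) i| ≤ K * ‖v‖ := by
      intro v i
      have h1 : |g (0, v) i| ≤ ‖Gc v‖ := by
        have h2 := norm_le_pi_norm (Gc v) i
        rw [hGcapp] at h2
        rw [hGcapp]
        simpa using h2
      exact h1.trans (Gc.le_opNorm v)
    set C := 2 * (n : ℝ) * K ^ 2 / pm ^ 2 with hC
    have hC0 : (0:ℝ) ≤ C := by positivity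
    have hquad : ∀ v : EuclideanSpace ℝ (Fin d),
        ∑ i, 2 * (g (0, v) i) ^ 2 / (p x i) ^ 2 ≤ C * ‖v‖ ^ 2 := by
      intro v
      calc ∑ i, 2 * (g (0, v) i) ^ 2 / (p x i) ^ 2
          ≤ ∑ _i : Fin n, 2 * (K * ‖v‖) ^ 2 / pm ^ 2 := by
            apply Finset.sum_le_sum
            intro i _
            apply div_le_div₀ (by positivity) ?_ (pow_pos hpm0 2) (pow_le_pow_left₀ hpm0.le (hpmle i) 2)
            have h2 : (g (0, v) i) ^ 2 ≤ (K * ‖v‖) ^ 2 := by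
              rw [← sq_abs]
              exact pow_le_pow_left₀ (abs_nonneg _) (hGc v i) 2
            linarith
        _ = (n : ℝ) * (2 * (K * ‖v‖) ^ 2 / pm ^ 2) := by
            rw [Finset.sum_const, Finset.card_univ, Fintype.card_fin, nsmul_eq_mul]
        _ = C * ‖v‖ ^ 2 := by rw [hC]; ring
    -- upper bound
    have hup : ∀ y ∈ interior P, entropyU a y - entropyU a x ≤ L (y - x) := by
      intro y hy
      obtain ⟨hpos', hsum', hbar', hval'⟩ := hp y hy
      have hkey : ∑ i, (p y i - p x i) / p x i = L (y - x) := by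
        have h1 := hident (fun i => p y i - p x i)
        have h2 : ∑ i, (p y i - p x i) = 0 := by
          rw [Finset.sum_sub_distrib, hsum', hsum, sub_self]
        have h3 : ∑ i, (p y i - p x i) • a i = y - x := by
          simp only [sub_smul, Finset.sum_sub_distrib, hbar', hbar]
        rw [h2, h3] at h1
        rw [h1, hLapp]
      have hterm : ∀ i, Real.log (p y i) - Real.log (p x i) ≤ (p y i - p x i) / p x i := by
        intro i
        have h2 : Real.log (p y i / p x i) ≤ p y i / p x i - 1 :=
          Real.log_le_sub_one_of_pos (div_pos (hpos' i) (hpos i))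
        rw [Real.log_div (hpos' i).ne' (hpos i).ne'] at h2
        have h3 : p y i / p x i - 1 = (p y i - p x i) / p x i := by
          rw [sub_div, div_self (hpos i).ne']
        linarith
      calc entropyU a y - entropyU a x = ∑ i, (Real.log (p y i) - Real.log (p x i)) := by
            rw [Finset.sum_sub_distrib, hval', hval]
        _ ≤ ∑ i, (p y i - p x i) / p x i := Finset.sum_le_sum fun i _ => hterm i
        _ = L (y - x) := hkey
    -- lower bound
    have hlo : ∀ v : EuclideanSpace ℝ (Fin d), (∀ i, |g (0, v) i| ≤ p x i / 2) →
        entropyU a x + L v - ∑ i, 2 * (g (0, v) i) ^ 2 / (p x i) ^ 2 ≤ entropyU a (x + v) := by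
      intro v hv
      have hr1 : ∑ i, g (0, v) i = 0 := by
        have := hg1 (0, v); simpa using this
      have hr2 : ∑ i, g (0, v) i • a i = v := by
        have := hg2 (0, v); simpa using this
      have hpos2 : ∀ i, 0 < p x i + g (0, v) i := by
        intro i
        have h1 := (abs_le.mp (hv i)).1
        have h2 := hpos i
        linarith
      have hfeas : ∑ i, Real.log (p x i + g (0, v) i) ≤ entropyU a (x + v) := by
        apply hle _ _ hpos2
        · rw [Finset.sum_add_distrib, hsum, hr1, add_zero]
        · simp only [add_smul, Finset.sum_add_distrib, hbar, hr2]
      have hLv : ∑ i, g (0, v) i / p x i = L v := by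
        have h1 := hident (fun i => g (0, v) i)
        rw [hr1, hr2] at h1
        rw [h1, hLapp]
      have hterm : ∀ i, Real.log (p x i) + g (0, v) i / p x i
          - 2 * (g (0, v) i) ^ 2 / (p x i) ^ 2 ≤ Real.log (p x i + g (0, v) i) := by
        intro i
        have hpi : (0:ℝ) < p x i := hpos i
        have hpri : (0:ℝ) < p x i + g (0, v) i := hpos2 i
        have h2r : (0:ℝ) ≤ p x i + 2 * g (0, v) i := by
          have := (abs_le.mp (hv i)).1
          linarith
        have h1 : Real.log (p x i) - Real.log (p x i + g (0, v) i)
            ≤ p x i / (p x i + g (0, v) i) - 1 := by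
          have h := Real.log_le_sub_one_of_pos (div_pos hpi hpri)
          rw [Real.log_div hpi.ne' hpri.ne'] at h
          exact h
        have h2 : p x i / (p x i + g (0, v) i) - 1 = -(g (0, v) i / (p x i + g (0, v) i)) := by
          field_simp
          ring
        have h3 : g (0, v) i / p x i - 2 * (g (0, v) i) ^ 2 / (p x i) ^ 2
            ≤ g (0, v) i / (p x i + g (0, v) i) := by
          rw [div_sub_div _ _ hpi.ne' (pow_pos hpi 2).ne', div_le_div_iff₀
            (by positivity) hpri]
          nlinarith [mul_nonneg (mul_nonneg (sq_nonneg (g (0, v) i)) hpi.le) h2r]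
        linarith
      calc entropyU a x + L v - ∑ i, 2 * (g (0, v) i) ^ 2 / (p x i) ^ 2
          = ∑ i, (Real.log (p x i) + g (0, v) i / p x i
              - 2 * (g (0, v) i) ^ 2 / (p x i) ^ 2) := by
            rw [Finset.sum_sub_distrib, Finset.sum_add_distrib, hval, hLv]
        _ ≤ ∑ i, Real.log (p x i + g (0, v) i) := Finset.sum_le_sum fun i _ => hterm i
        _ ≤ entropyU a (x + v) := hfeas
    -- eventual bound
    have hbound : ∀ᶠ v : EuclideanSpace ℝ (Fin d) in nhds 0,
        |entropyU a (x + v) - entropyU a x - L v| ≤ C * ‖v‖ ^ 2 := by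
      have hδ : (0:ℝ) < pm / (2 * (K + 1)) := by positivity
      have hev1 : ∀ᶠ v : EuclideanSpace ℝ (Fin d) in nhds 0, ‖v‖ < pm / (2 * (K + 1)) := by
        have hball := Metric.ball_mem_nhds (0 : EuclideanSpace ℝ (Fin d)) hδ
        exact Filter.eventually_of_mem hball fun v hv => by
          rwa [mem_ball_zero_iff] at hv
      have hev2 : ∀ᶠ v : EuclideanSpace ℝ (Fin d) in nhds 0, x + v ∈ interior P := by
        have hcont : Filter.Tendsto (fun v : EuclideanSpace ℝ (Fin d) => x + v)
            (nhds 0) (nhds x) := by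
          have h := (continuous_const.add continuous_id :
            Continuous fun v : EuclideanSpace ℝ (Fin d) => x + v).tendsto 0
          simpa using (show Filter.Tendsto (fun v : EuclideanSpace ℝ (Fin d) => x + v) (nhds 0) (nhds (x + 0)) from h)
        exact hcont.eventually (isOpen_interior.eventually_mem hx)
      filter_upwards [hev1, hev2] with v hv1 hv2
      have hsmall : ∀ i, |g (0, v) i| ≤ p x i / 2 := by
        intro i
        have h1 := hGc v i
        have h2 : K * ‖v‖ ≤ pm / 2 := by
          have h3 : K * ‖v‖ ≤ K * (pm / (2 * (K + 1))) :=
            mul_le_mul_of_nonneg_left hv1.le hK0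
          have h4 : K * (pm / (2 * (K + 1))) ≤ pm / 2 := by
            rw [mul_div_assoc', div_le_div_iff₀ (by positivity) (by norm_num)]
            nlinarith
          linarith
        have h5 := hpmle i
        linarith
      have h1 := hup (x + v) hv2
      rw [add_sub_cancel_left] at h1
      have h2 := hlo v hsmall
      have h3 := hquad v
      rw [abs_le]
      constructor <;> nlinarith
    -- derivative
    have hderiv : HasFDerivAt (entropyU a) L x := by
      rw [hasFDerivAt_iff_isLittleO_nhds_zero]
      have hbig : (fun v : EuclideanSpace ℝ (Fin d) =>
          entropyU a (x + v) - entropyU a x - L v) =O[nhds 0] fun v => ‖v‖ ^ 2 := by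
        rw [Asymptotics.isBigO_iff]
        refine ⟨C, ?_⟩
        filter_upwards [hbound] with v hv
        simp only [Real.norm_eq_abs]
        rw [abs_of_nonneg (sq_nonneg ‖v‖)]
        exact hv
      have hlit : (fun v : EuclideanSpace ℝ (Fin d) => ‖v‖ ^ 2)
          =o[nhds 0] (fun v : EuclideanSpace ℝ (Fin d) => v) := by
        rw [Asymptotics.isLittleO_iff]
        intro c hc
        have hball := Metric.ball_mem_nhds (0 : EuclideanSpace ℝ (Fin d)) hc
        refine Filter.eventually_of_mem hball fun v hv => ?_
        rw [mem_ball_zero_iff] at hv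
        rw [Real.norm_eq_abs, abs_of_nonneg (sq_nonneg _)]
        nlinarith [norm_nonneg v]
      exact hbig.trans_isLittleO hlit
    exact ⟨L, hderiv, hform⟩
  constructor
  · intro x hx
    obtain ⟨L, hL, -⟩ := main x hx
    exact hL.differentiableAt
  · intro x hx q ξ hξ
    obtain ⟨L, hL, hform⟩ := main x hx
    rw [hL.fderiv]
    exact hform q ξ hξ
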